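/- Let A be a field of characteristic zero, B a finite-dimensional commutative A-algebra all of whose residue fields are A, and L a field extension of A. Let R be an integral domain which is an A-algebra, F its field of fractions, and e : R → L ⊗[A] B an A-algebra homomorphism such that for every A-algebra homomorphism ρ : B → A the composite ρ^L ∘ e : R → L is injective. Then there is a unique A-algebra homomorphism ẽ : F → L ⊗[A] B such that ẽ composed with the canonical map R → F equals e. -/

import Mathlib

open TensorProduct


/-- For an `A`-algebra homomorphism `ρ : B →ₐ[A] A`, the induced `A`-algebra homomorphism
`ρ^L : L ⊗[A] B → L`, determined by `l ⊗ b ↦ l • ρ b`. -/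
noncomputable def rhoHom (A L B : Type*) [CommSemiring A] [CommRing L] [Algebra A L]
    [CommRing B] [Algebra A B] (ρ : B →ₐ[A] A) : TensorProduct A L B →ₐ[A] L :=
  (Algebra.TensorProduct.rid A A L).toAlgHom.comp
    (Algebra.TensorProduct.map (AlgHom.id A L) ρ)

lemma rhoHom_tmul {A L B : Type*} [Field A] [CommRing L] [Algebra A L]
    [CommRing B] [Algebra A B] (ρ : B →ₐ[A] A) (l : L) (b : B) :
    rhoHom A L B ρ (l ⊗ₜ[A] b) = l * algebraMap A L (ρ b) := by
  simp [rhoHom, Algebra.TensorProduct.rid_tmul, Algebra.smul_def, mul_comm]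

lemma key_isUnit {A B L : Type*} [Field A] [CommRing B] [Algebra A B]
    [FiniteDimensional A B] [Field L] [Algebra A L]
    (hres : ∀ m : Ideal B, m.IsMaximal → Function.Bijective (algebraMap A (B ⧸ m)))
    (x : TensorProduct A L B)
    (hx : ∀ ρ : B →ₐ[A] A, rhoHom A L B ρ x ≠ 0) : IsUnit x := by
  by_contra h
  obtain ⟨M, hM, hxM⟩ := exists_max_ideal_of_mem_nonunits h
  haveI : IsArtinianRing B := IsArtinianRing.of_finite A B
  set m : Ideal B := M.comap (Algebra.TensorProduct.includeRight : B →ₐ[A] _).toRingHom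
    with hm_def
  haveI hmp : m.IsPrime := Ideal.comap_isPrime _ M
  haveI hmm : m.IsMaximal := IsArtinianRing.isMaximal_of_isPrime m
  -- build ρ : B →ₐ[A] A
  let eqv : A ≃ₐ[A] B ⧸ m := AlgEquiv.ofBijective (Algebra.ofId A (B ⧸ m)) (hres m hmm)
  let ρ : B →ₐ[A] A := eqv.symm.toAlgHom.comp (Ideal.Quotient.mkₐ A m)
  have hker : ∀ b : B, ρ b = 0 → b ∈ m := by
    intro b hb
    have h2 : Ideal.Quotient.mk m b = eqv (ρ b) := (eqv.apply_symm_apply _).symm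
    rw [hb, map_zero] at h2
    exact (Ideal.Quotient.eq_zero_iff_mem).1 h2
  -- the key claim
  have claim : ∀ z : TensorProduct A L B,
      z - (rhoHom A L B ρ z) ⊗ₜ[A] (1 : B) ∈ M := by
    intro z
    induction z using TensorProduct.induction_on with
    | zero => simpa using M.zero_mem
    | tmul l b =>
      have hb : b - algebraMap A B (ρ b) ∈ m := by
        apply hker
        simp
      have hmem : (1 : L) ⊗ₜ[A] (b - algebraMap A B (ρ b)) ∈ M := hb
      have hmem2 : (l ⊗ₜ[A] (1 : B)) * ((1 : L) ⊗ₜ[A] (b - algebraMap A B (ρ b))) ∈ M :=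
        M.mul_mem_left _ hmem
      have heq : (l ⊗ₜ[A] (1 : B)) * ((1 : L) ⊗ₜ[A] (b - algebraMap A B (ρ b)))
          = l ⊗ₜ[A] b - (rhoHom A L B ρ (l ⊗ₜ[A] b)) ⊗ₜ[A] (1 : B) := by
        rw [rhoHom_tmul]
        rw [Algebra.TensorProduct.tmul_mul_tmul]
        rw [mul_one, one_mul]
        rw [TensorProduct.tmul_sub]
        congr 1
        rw [Algebra.algebraMap_eq_smul_one, TensorProduct.tmul_smul,
          TensorProduct.smul_tmul', Algebra.smul_def, mul_comm]
      rw [← heq]; exact hmem2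
    | add z w hz hw =>
      have := M.add_mem hz hw
      convert this using 1
      rw [map_add]
      rw [TensorProduct.add_tmul]
      ring
  have hx0 : rhoHom A L B ρ x ⊗ₜ[A] (1 : B) ∈ M := by
    have h1 := claim x
    have := M.sub_mem hxM h1
    simpa using this
  rcases eq_or_ne (rhoHom A L B ρ x) 0 with h0 | h0
  · exact hx ρ h0
  · have : IsUnit ((rhoHom A L B ρ x) ⊗ₜ[A] (1 : B)) := by
      have : ((rhoHom A L B ρ x) ⊗ₜ[A] (1 : B)) =
          Algebra.TensorProduct.includeLeft (R := A) (S := A) (rhoHom A L B ρ x) := rfl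
      rw [this]
      exact (IsUnit.mk0 _ h0).map _
    exact hM.ne_top (M.eq_top_of_isUnit_mem hx0 this)

/-- Let `A` be a field of characteristic zero, `B` a finite-dimensional
commutative `A`-algebra all of whose residue fields are `A`, and `L` a field extension of `A`.
Let `R` be an integral domain which is an `A`-algebra, `F` its field of fractions, and
`e : R → L ⊗[A] B` an `A`-algebra homomorphism such that `ρ^L ∘ e` is injective for every
`A`-algebra homomorphism `ρ : B → A`.  Then there is a unique `A`-algebra homomorphism
`etilde : F → L ⊗[A] B` with `etilde ∘ (R → F) = e`. -/
theorem exists_unique_extension_to_fractionField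
    {A B L R F : Type*} [Field A] [CharZero A] [CommRing B] [Algebra A B]
    [FiniteDimensional A B] [Field L] [Algebra A L]
    (hres : ∀ m : Ideal B, m.IsMaximal → Function.Bijective (algebraMap A (B ⧸ m)))
    [CommRing R] [IsDomain R] [Algebra A R]
    [Field F] [Algebra R F] [IsFractionRing R F] [Algebra A F] [IsScalarTower A R F]
    (e : R →ₐ[A] TensorProduct A L B)
    (hinj : ∀ ρ : B →ₐ[A] A, Function.Injective ((rhoHom A L B ρ).comp e)) :
    ∃! etilde : F →ₐ[A] TensorProduct A L B,
      etilde.comp (IsScalarTower.toAlgHom A R F) = e := by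
  have hu : ∀ y : nonZeroDivisors R, IsUnit (e.toRingHom y) := by
    rintro ⟨y, hy⟩
    refine key_isUnit hres _ (fun ρ h0 => ?_)
    have hy0 : y ≠ 0 := nonZeroDivisors.ne_zero hy
    exact hy0 (hinj ρ (by simpa using h0))
  let lift : F →+* TensorProduct A L B := IsLocalization.lift (M := nonZeroDivisors R) hu
  have hlift : ∀ r : R, lift (algebraMap R F r) = e r := fun r =>
    IsLocalization.lift_eq hu r
  let etilde : F →ₐ[A] TensorProduct A L B :=
    { lift with
      commutes' := fun a => by
        have h1 : algebraMap A F a = algebraMap R F (algebraMap A R a) :=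
          (IsScalarTower.algebraMap_apply A R F a)
        simp only [RingHom.toMonoidHom_eq_coe, OneHom.toFun_eq_coe, MonoidHom.toOneHom_coe,
          MonoidHom.coe_coe, h1]
        rw [hlift, e.commutes] }
  refine ⟨etilde, ?_, ?_⟩
  · ext r
    exact hlift r
  · intro g hg
    apply AlgHom.coe_ringHom_injective
    apply IsLocalization.ringHom_ext (nonZeroDivisors R)
    ext r
    have h2 : g (algebraMap R F r) = e r := by
      have := congrArg (fun h : R →ₐ[A] TensorProduct A L B => h r) hg
      simpa using this
    have h3 : etilde (algebraMap R F r) = e r := hlift r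
    simpa [h2] using h3.symm
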